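/- Infinite ping-pong lemma: let a group G act on a set X, and let (g_i) be a (finite or countable) family of elements of G equipped with subsets A_i^+, R_i^+, A_i^-, R_i^- of X such that: (a) A_i^+ ∩ (A_i^- ∪ R_i^+) = ∅ and A_i^- ∩ (A_i^+ ∪ R_i^-) = ∅ for each i; (b) A_i^± ∩ (A_j^± ∪ R_j^±) = ∅ for all i ≠ j and all sign choices; (c) g_i·(X \ R_i^+) ⊆ A_i^+ and g_i^{-1}·(X \ R_i^-) ⊆ A_i^-. If moreover X is not covered by the union of all these sets (there is a point outside all of them), then the elements g_i freely generate a free subgroup of G. -/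

import Mathlib

/-- Infinite ping-pong lemma: a countable family of elements with pairwise
disjoint attracting/repelling sets, contracting as prescribed, and with some
point of `X` lying outside all of the sets, freely generates a free subgroup. -/
theorem infinite_ping_pong
    (G : Type*) [Group G] (X : Type*) [MulAction G X]
    (ι : Type*) [Countable ι] (g : ι → G)
    (Ap Rp Am Rm : ι → Set X)
    (ha : ∀ i, Ap i ∩ (Am i ∪ Rp i) = ∅ ∧ Am i ∩ (Ap i ∪ Rm i) = ∅)
    (hb : ∀ i j, i ≠ j →
      (Ap i ∩ (Ap j ∪ Rp j) = ∅ ∧ Ap i ∩ (Am j ∪ Rm j) = ∅ ∧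
        Am i ∩ (Ap j ∪ Rp j) = ∅ ∧ Am i ∩ (Am j ∪ Rm j) = ∅))
    (hc : ∀ i, (∀ x ∉ Rp i, g i • x ∈ Ap i) ∧ (∀ x ∉ Rm i, (g i)⁻¹ • x ∈ Am i))
    (hout : ∃ x : X, ∀ i, x ∉ Ap i ∪ Rp i ∪ Am i ∪ Rm i) :
    Function.Injective (FreeGroup.lift g) := by
  classical
  obtain ⟨x₀, hx₀⟩ := hout
  -- attracting set, repelling set, and element associated to a letter
  set A : ι × Bool → Set X := fun p => if p.2 then Ap p.1 else Am p.1 with hA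
  set R : ι × Bool → Set X := fun p => if p.2 then Rp p.1 else Rm p.1 with hR
  set e : ι × Bool → G := fun p => if p.2 then g p.1 else (g p.1)⁻¹ with he
  -- basic facts
  have hx₀A : ∀ p, x₀ ∉ A p := by
    rintro ⟨i, b⟩ h
    have := hx₀ i
    cases b <;> simp_all [A]
  have hx₀R : ∀ p, x₀ ∉ R p := by
    rintro ⟨i, b⟩ h
    have := hx₀ i
    cases b <;> simp_all [R]
  have hstep : ∀ p y, y ∉ R p → e p • y ∈ A p := by
    rintro ⟨i, b⟩ y hy
    cases b
    · simpa [A, R, e] using (hc i).2 y (by simpa [R] using hy)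
    · simpa [A, R, e] using (hc i).1 y (by simpa [R] using hy)
  -- a point in A q, with (p, q) an admissible adjacent pair, is not in R p
  have hAR : ∀ p q : ι × Bool, ¬(p.1 = q.1 ∧ p.2 = !q.2) → ∀ y ∈ A q, y ∉ R p := by
    rintro ⟨i, b⟩ ⟨j, c⟩ hpq y hyA hyR
    by_cases hij : i = j
    · subst hij
      have hbc : b = c := by
        cases b <;> cases c <;> simp_all
      subst hbc
      have h1 := (ha i).1
      have h2 := (ha i).2
      cases b
      · exact Set.eq_empty_iff_forall_notMem.1 h2 y
          ⟨by simpa [A] using hyA, Or.inr (by simpa [R] using hyR)⟩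
      · exact Set.eq_empty_iff_forall_notMem.1 h1 y
          ⟨by simpa [A] using hyA, Or.inr (by simpa [R] using hyR)⟩
    · obtain ⟨h1, h2, h3, h4⟩ := hb j i (fun h => hij h.symm)
      cases b <;> cases c
      · exact Set.eq_empty_iff_forall_notMem.1 h4 y
          ⟨by simpa [A] using hyA, Or.inr (by simpa [R] using hyR)⟩
      · exact Set.eq_empty_iff_forall_notMem.1 h2 y
          ⟨by simpa [A] using hyA, Or.inr (by simpa [R] using hyR)⟩
      · exact Set.eq_empty_iff_forall_notMem.1 h3 y
          ⟨by simpa [A] using hyA, Or.inr (by simpa [R] using hyR)⟩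
      · exact Set.eq_empty_iff_forall_notMem.1 h1 y
          ⟨by simpa [A] using hyA, Or.inr (by simpa [R] using hyR)⟩
  -- main ping-pong induction
  have main : ∀ (M : List (ι × Bool)) (q : ι × Bool),
      (∀ (L₂ : List (ι × Bool)) (x : ι) (b : Bool) (L₃ : List (ι × Bool)),
        q :: M ≠ L₂ ++ (x, b) :: (x, !b) :: L₃) →
      (((q :: M).map e).prod) • x₀ ∈ A q := by
    intro M
    induction M with
    | nil =>
      intro q _
      simpa using hstep q x₀ (hx₀R q)
    | cons r M' ih =>
      intro q hred
      have hred' : ∀ (L₂ : List (ι × Bool)) (x : ι) (b : Bool) (L₃ : List (ι × Bool)),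
          r :: M' ≠ L₂ ++ (x, b) :: (x, !b) :: L₃ := by
        intro L₂ x b L₃ h
        exact hred (q :: L₂) x b L₃ (by simp [h])
      have hmem : (((r :: M').map e).prod) • x₀ ∈ A r := ih r hred'
      have hadj : ¬(q.1 = r.1 ∧ q.2 = !r.2) := by
        rintro ⟨h1, h2⟩
        obtain ⟨i, b⟩ := q
        obtain ⟨j, c⟩ := r
        simp only at h1 h2
        subst h1; subst h2
        exact hred [] i (!c) M' (by simp)
      have hnotR := hAR q r hadj _ hmem
      have := hstep q _ hnotR
      simpa [mul_smul] using this
  -- conclude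
  rw [injective_iff_map_eq_one]
  intro w hw
  by_contra hne
  have hLne : w.toWord ≠ [] := by
    simpa [FreeGroup.toWord_eq_nil_iff] using hne
  obtain ⟨p, L', hL⟩ := List.exists_cons_of_ne_nil hLne
  have hred : ∀ (L₂ : List (ι × Bool)) (x : ι) (b : Bool) (L₃ : List (ι × Bool)),
      w.toWord ≠ L₂ ++ (x, b) :: (x, !b) :: L₃ := by
    intro L₂ x b L₃ h
    exact FreeGroup.reduce.not (α := ι) (p := False)
      (by rw [FreeGroup.reduce_toWord]; exact h)
  have hmem := main L' p (by rw [← hL]; exact hred)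
  -- identify the product with the lift
  have hlift : FreeGroup.lift g w = ((w.toWord.map e).prod) := by
    conv_lhs => rw [← FreeGroup.mk_toWord (x := w)]
    rw [FreeGroup.lift_mk]
    congr 1
    apply List.map_congr_left
    rintro ⟨i, b⟩ _
    cases b <;> simp [e]
  rw [hL] at hlift
  rw [← hlift, hw] at hmem
  simp only [one_smul] at hmem
  exact hx₀A p hmem
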